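/- The projection p: sim(Γ_{n+1}) → sim(Γₙ) is 1-Lipschitz with respect to the Kantorovich distances k_{ρ_{n+1}} and k_{ρₙ}, where ρ_{n+1} is the intrinsic semimetric defined via ρ_{n+1}(u,v) = k_{ρₙ}(ν_u,ν_v): for all μ,ν ∈ sim(Γ_{n+1}), k_{ρₙ}(p(μ),p(ν)) ≤ k_{ρ_{n+1}}(μ,ν). -/
import Mathlib


open Finset

/-- A probability distribution on a finite set, given by its weights. -/
def IsProb {X : Type*} [Fintype X] (μ : X → ℝ) : Prop :=
  (∀ x, 0 ≤ μ x) ∧ ∑ x, μ x = 1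

/-- A coupling of `μ` and `ν`: nonnegative weights whose first marginal is `μ`
and second marginal is `ν`. -/
def IsCoupling {X : Type*} [Fintype X] (μ ν : X → ℝ) (c : X → X → ℝ) : Prop :=
  (∀ x y, 0 ≤ c x y) ∧ (∀ x, ∑ y, c x y = μ x) ∧ (∀ y, ∑ x, c x y = ν y)

/-- The Kantorovich (transportation) distance between two probability
distributions on a finite (semi)metric space `(X, d)`. -/
noncomputable def kant {X : Type*} [Fintype X] (d : X → X → ℝ) (μ ν : X → ℝ) : ℝ :=
  sInf { r | ∃ c, IsCoupling μ ν c ∧ r = ∑ x, ∑ y, d x y * c x y }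

/-- The Dirac (point mass) distribution at a point. -/
def dirac {X : Type*} [DecidableEq X] (x : X) : X → ℝ := fun y => if y = x then 1 else 0
/-- An `ℕ`-graded graph (Bratteli diagram): one vertex at level `0`, finitely
many vertices at each level, edges only between adjacent levels, every vertex of
positive level has a predecessor and every vertex has a follower. -/
structure GradedGraph where
  V : ℕ → Type
  fin : ∀ n, Fintype (V n)
  rootNonempty : Nonempty (V 0)
  rootSubsingleton : Subsingleton (V 0)
  adj : ∀ n, V n → V (n + 1) → Prop
  hasPred : ∀ n (v : V (n + 1)), ∃ w, adj n w v
  hasSucc : ∀ n (v : V n), ∃ u, adj n v u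

instance (G : GradedGraph) (n : ℕ) : Fintype (G.V n) := G.fin n

/-- The type of paths from the root to a vertex `v` of level `n`. -/
def GradedGraph.PathTo (G : GradedGraph) : ∀ n, G.V n → Type
  | 0, _ => PUnit
  | n + 1, v => Σ w : G.V n, PLift (G.adj n w v) × G.PathTo n w

/-- The dimension of a vertex: the number of paths from the root to it. -/
noncomputable def GradedGraph.dim (G : GradedGraph) (n : ℕ) (v : G.V n) : ℕ :=
  Nat.card (G.PathTo n v)

open Classical in
/-- The probability measure on the predecessors of a vertex `v ∈ Γ_{n+1}`
induced by `v`: `ν_v(w) = dim w / dim v` for `w ≺ v`. -/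
noncomputable def GradedGraph.nu (G : GradedGraph) (n : ℕ) (v : G.V (n + 1)) :
    G.V n → ℝ :=
  fun w => if G.adj n w v then (G.dim n w : ℝ) / (G.dim (n + 1) v : ℝ) else 0

/-- The projection `p : sim(Γ_{n+1}) → sim(Γ_n)`, the affine extension of
`v ↦ Σ_{w ≺ v} ν_v(w) δ_w`. -/
noncomputable def GradedGraph.proj (G : GradedGraph) (n : ℕ)
    (a : G.V (n + 1) → ℝ) : G.V n → ℝ :=
  fun w => ∑ v, a v * G.nu n v w


section Aux

theorem nat_card_sigma {α : Type*} [Fintype α] (β : α → Type*) [∀ a, Finite (β a)] :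
    Nat.card (Σ a, β a) = ∑ a, Nat.card (β a) := by
  classical
  haveI : ∀ a, Fintype (β a) := fun a => Fintype.ofFinite _
  rw [Nat.card_eq_fintype_card, Fintype.card_sigma]
  exact Finset.sum_congr rfl fun a _ => (Nat.card_eq_fintype_card).symm

theorem GradedGraph.pathTo_finite (G : GradedGraph) :
    ∀ n (v : G.V n), Finite (G.PathTo n v) := by
  intro n
  induction n with
  | zero =>
    intro v
    unfold GradedGraph.PathTo
    infer_instance
  | succ n ih =>
    intro v
    haveI : ∀ w : G.V n, Finite (G.PathTo n w) := ih
    unfold GradedGraph.PathTo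
    infer_instance

theorem GradedGraph.pathTo_nonempty (G : GradedGraph) :
    ∀ n (v : G.V n), Nonempty (G.PathTo n v) := by
  intro n
  induction n with
  | zero => intro v; exact ⟨PUnit.unit⟩
  | succ n ih =>
    intro v
    obtain ⟨w, hw⟩ := G.hasPred n v
    obtain ⟨q⟩ := ih w
    exact ⟨⟨w, ⟨hw⟩, q⟩⟩

theorem GradedGraph.dim_pos (G : GradedGraph) (n : ℕ) (v : G.V n) : 0 < G.dim n v := by
  haveI := G.pathTo_finite n v
  haveI := G.pathTo_nonempty n v
  exact Nat.card_pos

open Classical in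
theorem GradedGraph.dim_succ (G : GradedGraph) (n : ℕ) (v : G.V (n + 1)) :
    G.dim (n + 1) v = ∑ w, if G.adj n w v then G.dim n w else 0 := by
  haveI : ∀ w : G.V n, Finite (G.PathTo n w) := G.pathTo_finite n
  have h1 : G.dim (n + 1) v
      = Nat.card (Σ w : G.V n, PLift (G.adj n w v) × G.PathTo n w) := rfl
  rw [h1, nat_card_sigma]
  apply Finset.sum_congr rfl
  intro w _
  rw [Nat.card_prod]
  by_cases h : G.adj n w v
  · rw [if_pos h]
    have h2 : Nat.card (PLift (G.adj n w v)) = 1 := by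
      haveI : Nonempty (PLift (G.adj n w v)) := ⟨⟨h⟩⟩
      exact Nat.card_unique
    rw [h2, one_mul]
    rfl
  · rw [if_neg h]
    have h2 : Nat.card (PLift (G.adj n w v)) = 0 := by
      haveI : IsEmpty (PLift (G.adj n w v)) := ⟨fun p => h p.down⟩
      exact Nat.card_of_isEmpty
    rw [h2, zero_mul]

theorem GradedGraph.nu_prob (G : GradedGraph) (n : ℕ) (v : G.V (n + 1)) :
    IsProb (G.nu n v) := by
  classical
  have hpos : (0 : ℝ) < (G.dim (n + 1) v : ℝ) := by
    exact_mod_cast G.dim_pos (n + 1) v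
  constructor
  · intro w
    unfold GradedGraph.nu
    split
    · positivity
    · exact le_rfl
  · unfold GradedGraph.nu
    have e1 : ∑ w, (if G.adj n w v then (G.dim n w : ℝ) / (G.dim (n + 1) v : ℝ) else 0)
        = (∑ w, if G.adj n w v then (G.dim n w : ℝ) else 0) / (G.dim (n + 1) v : ℝ) := by
      rw [Finset.sum_div]
      apply Finset.sum_congr rfl
      intro w _
      split <;> simp
    have e2 : (∑ w, if G.adj n w v then (G.dim n w : ℝ) else 0) = (G.dim (n + 1) v : ℝ) := by
      rw [G.dim_succ n v]
      push_cast
      apply Finset.sum_congr rfl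
      intro w _
      split <;> simp
    rw [show (fun w => if G.adj n w v then (G.dim n w : ℝ) / (G.dim (n + 1) v : ℝ) else 0)
        = fun w => if G.adj n w v then (G.dim n w : ℝ) / (G.dim (n + 1) v : ℝ) else 0 from rfl]
    rw [e1, e2, div_self (ne_of_gt hpos)]

theorem prod_coupling {X : Type*} [Fintype X] {μ ν : X → ℝ} (hμ : IsProb μ)
    (hν : IsProb ν) : IsCoupling μ ν (fun x y => μ x * ν y) := by
  refine ⟨fun x y => mul_nonneg (hμ.1 x) (hν.1 y), fun x => ?_, fun y => ?_⟩
  · rw [← Finset.mul_sum, hν.2, mul_one]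
  · rw [← Finset.sum_mul, hμ.2, one_mul]

theorem kant_bddBelow {X : Type*} [Fintype X] {d : X → X → ℝ}
    (hd : ∀ x y, 0 ≤ d x y) (μ ν : X → ℝ) :
    BddBelow { r | ∃ c, IsCoupling μ ν c ∧ r = ∑ x, ∑ y, d x y * c x y } := by
  refine ⟨0, fun r hr => ?_⟩
  obtain ⟨c, hc, rfl⟩ := hr
  apply Finset.sum_nonneg
  intro x _
  apply Finset.sum_nonneg
  intro y _
  exact mul_nonneg (hd x y) (hc.1 x y)

theorem kant_le_cost {X : Type*} [Fintype X] {d : X → X → ℝ}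
    (hd : ∀ x y, 0 ≤ d x y) {μ ν : X → ℝ} {c : X → X → ℝ}
    (hc : IsCoupling μ ν c) :
    kant d μ ν ≤ ∑ x, ∑ y, d x y * c x y :=
  csInf_le (kant_bddBelow hd μ ν) ⟨c, hc, rfl⟩

theorem exists_near_coupling {X : Type*} [Fintype X] {d : X → X → ℝ}
    {μ ν : X → ℝ} (hμ : IsProb μ) (hν : IsProb ν) {ε : ℝ} (hε : 0 < ε) :
    ∃ c, IsCoupling μ ν c ∧ ∑ x, ∑ y, d x y * c x y < kant d μ ν + ε := by
  have hne : { r | ∃ c, IsCoupling μ ν c ∧ r = ∑ x, ∑ y, d x y * c x y }.Nonempty :=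
    ⟨_, (fun x y => μ x * ν y), prod_coupling hμ hν, rfl⟩
  obtain ⟨r, hr, hlt⟩ := Real.lt_sInf_add_pos hne hε
  obtain ⟨c, hc, rfl⟩ := hr
  exact ⟨c, hc, hlt⟩

theorem sum_swap3 {A B : Type*} [Fintype A] [Fintype B] (f : A → A → B → ℝ) :
    ∑ y, ∑ u, ∑ v, f u v y = ∑ u, ∑ v, ∑ y, f u v y :=
  calc ∑ y, ∑ u, ∑ v, f u v y
      = ∑ u, ∑ y, ∑ v, f u v y := Finset.sum_comm
    _ = ∑ u, ∑ v, ∑ y, f u v y :=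
        Finset.sum_congr rfl (fun _ _ => Finset.sum_comm)

theorem sum_swap4 {A B : Type*} [Fintype A] [Fintype B] (f : A → A → B → B → ℝ) :
    ∑ x, ∑ y, ∑ u, ∑ v, f u v x y = ∑ u, ∑ v, ∑ x, ∑ y, f u v x y :=
  calc ∑ x, ∑ y, ∑ u, ∑ v, f u v x y
      = ∑ x, ∑ u, ∑ y, ∑ v, f u v x y :=
        Finset.sum_congr rfl (fun _ _ => Finset.sum_comm)
    _ = ∑ u, ∑ x, ∑ y, ∑ v, f u v x y := Finset.sum_comm
    _ = ∑ u, ∑ x, ∑ v, ∑ y, f u v x y :=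
        Finset.sum_congr rfl (fun _ _ => Finset.sum_congr rfl (fun _ _ => Finset.sum_comm))
    _ = ∑ u, ∑ v, ∑ x, ∑ y, f u v x y :=
        Finset.sum_congr rfl (fun _ _ => Finset.sum_comm)

end Aux

/-- the projection `p : sim(Γ_{n+1}) → sim(Γ_n)` is 1-Lipschitz
from the Kantorovich distance over the intrinsic semimetric
`ρ_{n+1}(u,v) = k_{ρ_n}(ν_u, ν_v)` to the Kantorovich distance over `ρ_n`. -/
theorem proj_lipschitz (G : GradedGraph) (n : ℕ)
    (d : G.V n → G.V n → ℝ)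
    (hd_nonneg : ∀ x y, 0 ≤ d x y) (hd_self : ∀ x, d x x = 0)
    (hd_symm : ∀ x y, d x y = d y x)
    (hd_tri : ∀ x y z, d x z ≤ d x y + d y z)
    (μ ν : G.V (n + 1) → ℝ) (hμ : IsProb μ) (hν : IsProb ν) :
    kant d (G.proj n μ) (G.proj n ν) ≤
      kant (fun u v => kant d (G.nu n u) (G.nu n v)) μ ν := by
  classical
  have hne : { r | ∃ c, IsCoupling μ ν c ∧
      r = ∑ x, ∑ y, (kant d (G.nu n x) (G.nu n y)) * c x y }.Nonempty :=
    ⟨_, (fun x y => μ x * ν y), prod_coupling hμ hν, rfl⟩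
  apply le_csInf hne
  rintro r ⟨c, hc, rfl⟩
  apply le_of_forall_pos_le_add
  intro ε hε
  have hch : ∀ u v : G.V (n + 1), ∃ g, IsCoupling (G.nu n u) (G.nu n v) g ∧
      ∑ x, ∑ y, d x y * g x y < kant d (G.nu n u) (G.nu n v) + ε :=
    fun u v => exists_near_coupling (G.nu_prob n u) (G.nu_prob n v) hε
  choose g hg hgc using hch
  set C : G.V n → G.V n → ℝ := fun x y => ∑ u, ∑ v, c u v * g u v x y with hC
  have hCcoupling : IsCoupling (G.proj n μ) (G.proj n ν) C := by
    refine ⟨fun x y => ?_, fun x => ?_, fun y => ?_⟩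
    · apply Finset.sum_nonneg; intro u _; apply Finset.sum_nonneg; intro v _
      exact mul_nonneg (hc.1 u v) ((hg u v).1 x y)
    · calc ∑ y, C x y = ∑ u, ∑ v, ∑ y, c u v * g u v x y :=
            sum_swap3 (fun u v y => c u v * g u v x y)
        _ = ∑ u, ∑ v, c u v * G.nu n u x := by
            apply Finset.sum_congr rfl; intro u _
            apply Finset.sum_congr rfl; intro v _
            rw [← Finset.mul_sum, (hg u v).2.1 x]
        _ = ∑ u, μ u * G.nu n u x := by
            apply Finset.sum_congr rfl; intro u _
            rw [← Finset.sum_mul, hc.2.1 u]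
        _ = G.proj n μ x := rfl
    · calc ∑ x, C x y = ∑ u, ∑ v, ∑ x, c u v * g u v x y :=
            sum_swap3 (fun u v x => c u v * g u v x y)
        _ = ∑ u, ∑ v, c u v * G.nu n v y := by
            apply Finset.sum_congr rfl; intro u _
            apply Finset.sum_congr rfl; intro v _
            rw [← Finset.mul_sum, (hg u v).2.2 y]
        _ = ∑ v, ∑ u, c u v * G.nu n v y := Finset.sum_comm
        _ = ∑ v, ν v * G.nu n v y := by
            apply Finset.sum_congr rfl; intro v _
            rw [← Finset.sum_mul, hc.2.2 v]
        _ = G.proj n ν y := rfl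
  have key : ∑ x, ∑ y, d x y * C x y
      = ∑ u, ∑ v, c u v * ∑ x, ∑ y, d x y * g u v x y := by
    calc ∑ x, ∑ y, d x y * C x y
        = ∑ x, ∑ y, ∑ u, ∑ v, d x y * (c u v * g u v x y) := by
          apply Finset.sum_congr rfl; intro x _
          apply Finset.sum_congr rfl; intro y _
          rw [hC]
          simp only [Finset.mul_sum]
      _ = ∑ u, ∑ v, ∑ x, ∑ y, d x y * (c u v * g u v x y) :=
          sum_swap4 (fun u v x y => d x y * (c u v * g u v x y))
      _ = ∑ u, ∑ v, c u v * ∑ x, ∑ y, d x y * g u v x y := by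
          apply Finset.sum_congr rfl; intro u _
          apply Finset.sum_congr rfl; intro v _
          simp only [Finset.mul_sum]
          apply Finset.sum_congr rfl; intro x _
          apply Finset.sum_congr rfl; intro y _
          ring
  have hsum1 : ∑ u, ∑ v, c u v = 1 := by
    rw [← hμ.2]
    exact Finset.sum_congr rfl fun u _ => hc.2.1 u
  have hbound : ∑ x, ∑ y, d x y * C x y
      ≤ (∑ u, ∑ v, (kant d (G.nu n u) (G.nu n v)) * c u v) + ε := by
    rw [key]
    have h1 : ∑ u, ∑ v, c u v * ∑ x, ∑ y, d x y * g u v x y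
        ≤ ∑ u, ∑ v, c u v * (kant d (G.nu n u) (G.nu n v) + ε) := by
      apply Finset.sum_le_sum; intro u _
      apply Finset.sum_le_sum; intro v _
      exact mul_le_mul_of_nonneg_left (le_of_lt (hgc u v)) (hc.1 u v)
    refine h1.trans (le_of_eq ?_)
    have h2 : ∑ u, ∑ v, c u v * (kant d (G.nu n u) (G.nu n v) + ε)
        = (∑ u, ∑ v, (kant d (G.nu n u) (G.nu n v)) * c u v)
          + (∑ u, ∑ v, c u v) * ε := by
      simp only [Finset.sum_mul, ← Finset.sum_add_distrib]
      apply Finset.sum_congr rfl; intro u _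
      apply Finset.sum_congr rfl; intro v _
      ring
    rw [h2, hsum1, one_mul]
  exact (kant_le_cost hd_nonneg hCcoupling).trans hbound
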